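/- Let s > 0, κ ≥ 0, N₀ ≥ 0, and let h : (0, s] → (0, ∞) be differentiable and satisfy r·h′(r)/(2·h(r)) ≥ 1 + e^{−κr²}·N₀ − 2κr² for all r ∈ (0, s]. Then h(r) ≤ e^{(N₀+2)κs²}·( h(s)/s^{2+2N₀} )·r^{2+2N₀} for all r ∈ (0, s]. -/

import Mathlib

noncomputable section

/-- The mechanism behind the first bullet of Lemma 8.2: a lower bound on the frequency
`r·h′(r)/(2h(r)) − 1` forces the doubling bound `h(r) ≤ e^{(N₀+2)κs²}·(h(s)/s^{2+2N₀})·r^{2+2N₀}`. -/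
theorem doubling_bound (s κ N₀ : ℝ) (hs : 0 < s) (hκ : 0 ≤ κ) (hN₀ : 0 ≤ N₀)
    (h : ℝ → ℝ)
    (hpos : ∀ r ∈ Set.Ioc (0:ℝ) s, 0 < h r)
    (hdiff : ∀ r ∈ Set.Ioc (0:ℝ) s, DifferentiableAt ℝ h r)
    (hineq : ∀ r ∈ Set.Ioc (0:ℝ) s,
      r * deriv h r / (2 * h r) ≥ 1 + Real.exp (-κ * r ^ 2) * N₀ - 2 * κ * r ^ 2) :
    ∀ r ∈ Set.Ioc (0:ℝ) s,
      h r ≤ Real.exp ((N₀ + 2) * κ * s ^ 2) * (h s / s ^ (2 + 2 * N₀)) * r ^ (2 + 2 * N₀) := by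
  intro r hr
  obtain ⟨hr0, hrs⟩ := hr
  set F : ℝ → ℝ := fun t => Real.log (h t) - (2 + 2 * N₀) * Real.log t
      + (N₀ + 2) * κ * t ^ 2 with hFdef
  have hmem : ∀ t ∈ Set.Icc r s, t ∈ Set.Ioc (0:ℝ) s :=
    fun t ht => ⟨lt_of_lt_of_le hr0 ht.1, ht.2⟩
  -- derivative of F
  have hderivF : ∀ t ∈ Set.Ioc (0:ℝ) s,
      HasDerivAt F (deriv h t / h t - (2 + 2 * N₀) / t + 2 * ((N₀ + 2) * κ) * t) t := by
    intro t ht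
    have ht0 : (0:ℝ) < t := ht.1
    have hht : h t ≠ 0 := (hpos t ht).ne'
    have h1 : HasDerivAt (fun u => Real.log (h u)) (deriv h t / h t) t :=
      ((hdiff t ht).hasDerivAt).log hht
    have h2 : HasDerivAt (fun u => (2 + 2 * N₀) * Real.log u) ((2 + 2 * N₀) * t⁻¹) t :=
      (Real.hasDerivAt_log ht0.ne').const_mul _
    have h3 : HasDerivAt (fun u : ℝ => (N₀ + 2) * κ * u ^ 2) ((N₀ + 2) * κ * (2 * t)) t := by
      simpa using ((hasDerivAt_pow 2 t).const_mul ((N₀ + 2) * κ))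
    have := (h1.sub h2).add h3
    convert this using 1
    all_goals first | rfl | ring
  -- derivative nonneg
  have hderiv_nonneg : ∀ t ∈ Set.Ioc (0:ℝ) s,
      0 ≤ deriv h t / h t - (2 + 2 * N₀) / t + 2 * ((N₀ + 2) * κ) * t := by
    intro t ht
    have ht0 : (0:ℝ) < t := ht.1
    have hht : 0 < h t := hpos t ht
    have key : (2 + 2 * Real.exp (-κ * t ^ 2) * N₀ - 4 * κ * t ^ 2) / t ≤ deriv h t / h t := by
      have h1 := hineq t ht
      rw [ge_iff_le, le_div_iff₀ (by positivity)] at h1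
      rw [div_le_div_iff₀ ht0 hht]
      nlinarith [h1]
    have hexp : 1 - κ * t ^ 2 ≤ Real.exp (-κ * t ^ 2) := by
      have := Real.add_one_le_exp (-κ * t ^ 2)
      linarith
    have h2 : (2 + 2 * N₀ - 2 * ((N₀ + 2) * κ) * t ^ 2) / t
        ≤ (2 + 2 * Real.exp (-κ * t ^ 2) * N₀ - 4 * κ * t ^ 2) / t := by
      gcongr ?_ / t
      nlinarith [hexp, hN₀]
    have heq : (2 + 2 * N₀) / t - 2 * ((N₀ + 2) * κ) * t
        = (2 + 2 * N₀ - 2 * ((N₀ + 2) * κ) * t ^ 2) / t := by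
      field_simp
    linarith [key, h2, heq.le, heq.ge]
  -- monotonicity of F on [r, s]
  have hmono : MonotoneOn F (Set.Icc r s) := by
    apply monotoneOn_of_deriv_nonneg (convex_Icc r s)
    · intro t ht
      exact ((hderivF t (hmem t ht)).differentiableAt).continuousAt.continuousWithinAt
    · rw [interior_Icc]
      intro t ht
      exact ((hderivF t (hmem t ⟨ht.1.le, ht.2.le⟩)).differentiableAt).differentiableWithinAt
    · rw [interior_Icc]
      intro t ht
      have ht' : t ∈ Set.Ioc (0:ℝ) s := hmem t ⟨ht.1.le, ht.2.le⟩
      rw [(hderivF t ht').deriv]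
      exact hderiv_nonneg t ht'
  have hFrs : F r ≤ F s :=
    hmono ⟨le_refl r, hrs⟩ ⟨hrs, le_refl s⟩ hrs
  have hhs : 0 < h s := hpos s ⟨hs, le_refl s⟩
  have hhr : 0 < h r := hpos r ⟨hr0, hrs⟩
  -- rewrite RHS as exponential
  have hRHS : Real.exp ((N₀ + 2) * κ * s ^ 2) * (h s / s ^ (2 + 2 * N₀)) * r ^ (2 + 2 * N₀)
      = Real.exp (((N₀ + 2) * κ * s ^ 2 + (Real.log (h s) - Real.log s * (2 + 2 * N₀)))
          + Real.log r * (2 + 2 * N₀)) := by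
    rw [Real.rpow_def_of_pos hs, Real.rpow_def_of_pos hr0,
      Real.exp_add, Real.exp_add, Real.exp_sub, Real.exp_log hhs]
  rw [hRHS]
  have hkr : 0 ≤ (N₀ + 2) * κ * r ^ 2 := by positivity
  calc h r = Real.exp (Real.log (h r)) := (Real.exp_log hhr).symm
    _ ≤ _ := by
      apply Real.exp_le_exp.mpr
      simp only [hFdef] at hFrs
      nlinarith [hFrs, hkr]
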